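/- A game v belongs to the core-nonemptiness set, i.e., C(v) ≠ ∅, if and only if v is balanced (Bondareva–Shapley). In particular, the game v lies in BG(n) iff there exists x ∈ ℝ^N with x(N) = v(N) and x(S) ≥ v(S) for all S ⊆ N. -/

import Mathlib

open Finset

def IsBalancedCollection {n : ℕ} (B : Finset (Finset (Fin n)))
    (w : Finset (Fin n) → ℝ) : Prop :=
  (∀ S ∈ B, S.Nonempty) ∧ (∀ S ∈ B, 0 < w S) ∧
    ∀ i : Fin n, ∑ S ∈ B.filter (fun S => i ∈ S), w S = 1

def IsMinimalBalanced {n : ℕ} (B : Finset (Finset (Fin n)))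
    (w : Finset (Fin n) → ℝ) : Prop :=
  IsBalancedCollection B w ∧ ∀ B' ⊂ B, ∀ w', ¬ IsBalancedCollection B' w'

def core {n : ℕ} (v : Finset (Fin n) → ℝ) : Set (Fin n → ℝ) :=
  {x | (∀ S : Finset (Fin n), v S ≤ ∑ i ∈ S, x i) ∧ ∑ i, x i = v Finset.univ}


lemma cone_caratheodory {ι E : Type*} [Fintype ι] [DecidableEq ι]
    [AddCommGroup E] [Module ℝ E] (A : ι → E) :
    ∀ (N : ℕ) (c : ι → ℝ), (univ.filter (fun i => c i ≠ 0)).card ≤ N → (∀ i, 0 ≤ c i) →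
      ∃ (J : Finset ι) (c' : ι → ℝ),
        LinearIndependent ℝ (fun j : J => A j) ∧ (∀ i, 0 ≤ c' i) ∧
        (∀ i ∉ J, c' i = 0) ∧ ∑ i, c' i • A i = ∑ i, c i • A i := by
  intro N
  induction N with
  | zero =>
    intro c hcard hc
    refine ⟨∅, c, ?_, hc, ?_, rfl⟩
    · have : IsEmpty ((∅ : Finset ι) : Set ι) := by simp
      exact linearIndependent_empty_type
    · intro i _
      by_contra h
      have : i ∈ univ.filter (fun i => c i ≠ 0) := by simp [h]
      have := card_pos.2 ⟨i, this⟩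
      omega
  | succ N ih =>
    intro c hcard hc
    set J : Finset ι := univ.filter (fun i => c i ≠ 0) with hJ
    by_cases hli : LinearIndependent ℝ (fun j : J => A j)
    · exact ⟨J, c, hli, hc, fun i hi => by simpa [hJ] using hi, rfl⟩
    · obtain ⟨g, hg0, j₁, hj₁⟩ := Fintype.not_linearIndependent_iff.1 hli
      have key : ∀ (d : ι → ℝ), (∀ i ∉ J, d i = 0) → ∑ i, d i • A i = 0 →
          (∃ i, 0 < d i) →
          ∃ (J' : Finset ι) (c' : ι → ℝ),
            LinearIndependent ℝ (fun j : J' => A j) ∧ (∀ i, 0 ≤ c' i) ∧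
            (∀ i ∉ J', c' i = 0) ∧ ∑ i, c' i • A i = ∑ i, c i • A i := by
        rintro d hdsupp hdsum ⟨iplus, hiplus⟩
        set T : Finset ι := univ.filter (fun i => 0 < d i) with hT
        have hTne : T.Nonempty := ⟨iplus, by simp [hT, hiplus]⟩
        set t : ℝ := (T.image (fun i => c i / d i)).min' (hTne.image _) with ht
        obtain ⟨i₀, hi₀T, hi₀⟩ := mem_image.1 ((T.image (fun i => c i / d i)).min'_mem (hTne.image _))
        have hd₀ : 0 < d i₀ := by simpa [hT] using hi₀T
        have htval : t = c i₀ / d i₀ := by rw [ht, ← hi₀]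
        have htle : ∀ i ∈ T, t ≤ c i / d i := fun i hi =>
          min'_le _ _ (mem_image_of_mem _ hi)
        have ht0 : 0 ≤ t := htval ▸ div_nonneg (hc i₀) hd₀.le
        set c' : ι → ℝ := fun i => c i - t * d i with hc'
        have hc'0 : ∀ i, 0 ≤ c' i := by
          intro i
          rcases le_or_gt (d i) 0 with h | h
          · have : t * d i ≤ 0 := mul_nonpos_of_nonneg_of_nonpos ht0 h
            simp only [hc']
            linarith [hc i]
          · have h2 : t * d i ≤ c i := (le_div_iff₀ h).1 (htle i (by simp [hT, h]))
            simp only [hc']; linarith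
        have hi₀J : i₀ ∈ J := by
          by_contra h
          exact hd₀.ne' (hdsupp i₀ h)
        have hsupp' : ∀ i ∉ J.erase i₀, c' i = 0 := by
          intro i hi
          by_cases hii : i = i₀
          · subst hii
            simp only [hc', htval]
            field_simp
            ring
          · have hiJ : i ∉ J := by
              simp only [mem_erase] at hi
              tauto
            have h1 : c i = 0 := by simpa [hJ] using hiJ
            have h2 : d i = 0 := hdsupp i hiJ
            simp [hc', h1, h2]
        have hcard' : (univ.filter (fun i => c' i ≠ 0)).card ≤ N := by
          have hsub : univ.filter (fun i => c' i ≠ 0) ⊆ J.erase i₀ := by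
            intro i hi
            by_contra h
            exact (by simpa using hi : c' i ≠ 0) (hsupp' i h)
          have h1 : (J.erase i₀).card < J.card := card_erase_lt_of_mem hi₀J
          have := card_le_card hsub
          omega
        have hsum' : ∑ i, c' i • A i = ∑ i, c i • A i := by
          simp only [hc', sub_smul, Finset.sum_sub_distrib, mul_smul]
          rw [← Finset.smul_sum, hdsum, smul_zero, sub_zero]
        obtain ⟨J', c'', hli', hn', hs', he'⟩ := ih c' hcard' hc'0
        exact ⟨J', c'', hli', hn', hs', he'.trans hsum'⟩
      -- build the dependence vector on ι
      set d : ι → ℝ := fun i => if h : i ∈ J then g ⟨i, h⟩ else 0 with hd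
      have hdsupp : ∀ i ∉ J, d i = 0 := fun i hi => by simp [hd, hi]
      have hdsum : ∑ i, d i • A i = 0 := by
        rw [← Finset.sum_subset (Finset.subset_univ J)
          (fun i _ hi => by rw [hdsupp i hi, zero_smul])]
        rw [← Finset.sum_attach J (fun i => d i • A i)]
        rw [← hg0, Finset.univ_eq_attach]
        exact Finset.sum_congr rfl (fun j _ => by simp [hd, j.2])
      have hdj₁ : d ↑j₁ ≠ 0 := by simpa [hd, j₁.2] using hj₁
      rcases lt_or_gt_of_ne hdj₁ with h | h
      · refine key (fun i => -d i) (fun i hi => by simp [hdsupp i hi]) ?_ ⟨j₁, show (0:ℝ) < -d ↑j₁ from neg_pos.2 h⟩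
        simp only [neg_smul, Finset.sum_neg_distrib, hdsum, neg_zero]
      · exact key d hdsupp hdsum ⟨j₁, h⟩

lemma sum_support_subtype {ι E : Type*} [Fintype ι] [AddCommGroup E] [Module ℝ E]
    (A : ι → E) (c : ι → ℝ) (J : Finset ι) (h : ∀ i ∉ J, c i = 0) :
    ∑ j : J, c ↑j • A ↑j = ∑ i, c i • A i := by
  rw [← Finset.sum_subset (Finset.subset_univ J)
    (fun i _ hi => by rw [h i hi, zero_smul])]
  rw [← Finset.sum_attach J (fun i => c i • A i), Finset.univ_eq_attach]

lemma isClosed_finite_cone {ι E : Type*} [Fintype ι] [DecidableEq ι]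
    [NormedAddCommGroup E] [NormedSpace ℝ E] [FiniteDimensional ℝ E] (A : ι → E) :
    IsClosed {x : E | ∃ c : ι → ℝ, (∀ i, 0 ≤ c i) ∧ ∑ i, c i • A i = x} := by
  have hset : {x : E | ∃ c : ι → ℝ, (∀ i, 0 ≤ c i) ∧ ∑ i, c i • A i = x} =
      ⋃ J ∈ {J : Finset ι | LinearIndependent ℝ (fun j : J => A j)},
        {x : E | ∃ c : ι → ℝ, (∀ i, 0 ≤ c i) ∧ (∀ i ∉ J, c i = 0) ∧ ∑ i, c i • A i = x} := by
    ext x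
    simp only [Set.mem_setOf_eq, Set.mem_iUnion]
    constructor
    · rintro ⟨c, hc, rfl⟩
      obtain ⟨J, c', hli, hc', hs', he'⟩ :=
        cone_caratheodory A (Fintype.card ι) c (card_le_card (subset_univ _) |>.trans (by simp)) hc
      exact ⟨J, hli, c', hc', hs', he'⟩
    · rintro ⟨J, _, c, hc, _, rfl⟩
      exact ⟨c, hc, rfl⟩
  rw [hset]
  apply Set.Finite.isClosed_biUnion (Set.toFinite _)
  rintro J (hli : LinearIndependent ℝ (fun j : J => A j))
  -- this is the image of the nonnegative orthant under an injective linear map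
  set L : (J → ℝ) →ₗ[ℝ] E := Fintype.linearCombination ℝ (fun j : J => A ↑j) with hL
  have hLapp : ∀ g : J → ℝ, L g = ∑ j : J, g j • A ↑j := fun g => by
    simp [hL, Fintype.linearCombination_apply]
  have hker : LinearMap.ker L = ⊥ := by
    rw [LinearMap.ker_eq_bot']
    intro g hg
    rw [hLapp] at hg
    funext j
    exact Fintype.linearIndependent_iff.1 hli g hg j
  have himg : {x : E | ∃ c : ι → ℝ, (∀ i, 0 ≤ c i) ∧ (∀ i ∉ J, c i = 0) ∧ ∑ i, c i • A i = x}
      = L '' {g : J → ℝ | ∀ j, 0 ≤ g j} := by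
    ext x
    constructor
    · rintro ⟨c, hc, hs, rfl⟩
      exact ⟨fun j => c ↑j, fun j => hc _, by rw [hLapp]; exact sum_support_subtype A c J hs⟩
    · rintro ⟨g, hg, rfl⟩
      refine ⟨fun i => if h : i ∈ J then g ⟨i, h⟩ else 0, ?_, ?_, ?_⟩
      · intro i; by_cases h : i ∈ J <;> simp [h, hg _]
      · intro i hi; simp [hi]
      · rw [hLapp, ← sum_support_subtype A _ J (fun i hi => by simp [hi])]
        exact Finset.sum_congr rfl (fun j _ => by simp [j.2])
  rw [himg]
  have hcl : IsClosed {g : J → ℝ | ∀ j, 0 ≤ g j} := by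
    have : {g : J → ℝ | ∀ j, 0 ≤ g j} = ⋂ j, {g : J → ℝ | 0 ≤ g j} := by
      ext g; simp
    rw [this]
    exact isClosed_iInter fun j => isClosed_le continuous_const (continuous_apply j)
  exact (LinearMap.isClosedEmbedding_of_injective hker).isClosedMap _ hcl

open scoped InnerProductSpace in
theorem farkas_lemma {ι E : Type*} [Fintype ι] [DecidableEq ι]
    [NormedAddCommGroup E] [InnerProductSpace ℝ E] [FiniteDimensional ℝ E]
    (A : ι → E) (b : E) :
    (∃ c : ι → ℝ, (∀ i, 0 ≤ c i) ∧ ∑ i, c i • A i = b) ∨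
    ∃ y : E, (∀ i, 0 ≤ ⟪A i, y⟫_ℝ) ∧ ⟪y, b⟫_ℝ < 0 := by
  by_cases hb : ∃ c : ι → ℝ, (∀ i, 0 ≤ c i) ∧ ∑ i, c i • A i = b
  · exact Or.inl hb
  · right
    set K : ConvexCone ℝ E :=
      { carrier := {x : E | ∃ c : ι → ℝ, (∀ i, 0 ≤ c i) ∧ ∑ i, c i • A i = x}
        smul_mem' := by
          rintro r hr x ⟨c, hc, rfl⟩
          refine ⟨fun i => r * c i, fun i => mul_nonneg hr.le (hc i), ?_⟩
          rw [Finset.smul_sum]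
          exact Finset.sum_congr rfl fun i _ => (smul_smul r (c i) (A i)).symm
        add_mem' := by
          rintro x ⟨c, hc, rfl⟩ y ⟨c', hc', rfl⟩
          exact ⟨fun i => c i + c' i, fun i => add_nonneg (hc i) (hc' i), by
            rw [← Finset.sum_add_distrib]
            exact Finset.sum_congr rfl fun i _ => (add_smul (c i) (c' i) (A i))⟩ } with hK
    have hne : (K : Set E).Nonempty := ⟨0, ⟨0, fun i => le_refl 0, by simp⟩⟩
    have hcl : IsClosed (K : Set E) := isClosed_finite_cone A
    obtain ⟨y, hy1, hy2⟩ :=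
      ProperCone.hyperplane_separation' (x₀ := b)
        (C := { toSubmodule := K.toPointedCone ⟨0, fun i => le_refl 0, by simp⟩, isClosed' := hcl }) hb
    refine ⟨y, fun i => ?_, by rwa [real_inner_comm]⟩
    refine hy1 (A i) ⟨fun j => if j = i then 1 else 0, ?_, ?_⟩
    · intro j; by_cases h : j = i <;> simp [h]
    · simp [ite_smul]

lemma balanced_sum_le {n : ℕ} (v : Finset (Fin n) → ℝ) (h0 : v ∅ = 0)
    (H : ∀ (B : Finset (Finset (Fin n))) (w : Finset (Fin n) → ℝ),
      IsMinimalBalanced B w → B ≠ {Finset.univ} →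
        ∑ S ∈ B, w S * v S ≤ v Finset.univ) :
    ∀ (m : ℕ) (B : Finset (Finset (Fin n))) (w : Finset (Fin n) → ℝ), B.card ≤ m →
      IsBalancedCollection B w → ∑ S ∈ B, w S * v S ≤ v Finset.univ := by
  intro m
  induction m with
  | zero =>
    intro B w hcard hbal
    rw [Finset.card_eq_zero.1 (Nat.le_zero.1 hcard)] at hbal ⊢
    simp only [Finset.sum_empty]
    rcases Nat.eq_zero_or_pos n with hn | hn
    · subst hn
      have : (Finset.univ : Finset (Fin 0)) = ∅ := rfl
      rw [this, h0]
    · have := hbal.2.2 ⟨0, hn⟩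
      simp at this
  | succ m ih =>
    intro B w hcard hbal
    by_cases hBu : B = {Finset.univ}
    · subst hBu
      have hne : (Finset.univ : Finset (Fin n)).Nonempty :=
        hbal.1 _ (mem_singleton_self _)
      obtain ⟨i, -⟩ := hne
      have h1 := hbal.2.2 i
      rw [show ({Finset.univ} : Finset (Finset (Fin n))).filter (fun S => i ∈ S)
          = {Finset.univ} by rw [Finset.filter_singleton, if_pos (mem_univ i)],
        Finset.sum_singleton] at h1
      rw [Finset.sum_singleton, h1, one_mul]
    · by_cases hmin : ∀ B' ⊂ B, ∀ w', ¬ IsBalancedCollection B' w'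
      · exact H B w ⟨hbal, hmin⟩ hBu
      · push_neg at hmin
        obtain ⟨B', hB'ss, w', hbal'⟩ := hmin
        have hB'B : B' ⊆ B := hB'ss.subset
        obtain ⟨S₀, hS₀B, hS₀B'⟩ := Finset.exists_of_ssubset hB'ss
        obtain ⟨i₀, hi₀⟩ := hbal.1 S₀ hS₀B
        have hB'ne : B'.Nonempty := by
          by_contra h
          rw [Finset.not_nonempty_iff_eq_empty.1 h] at hbal'
          have := hbal'.2.2 i₀
          simp at this
        -- the minimum ratio
        set R := B'.image (fun S => w S / w' S) with hR
        have hRne : R.Nonempty := hB'ne.image _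
        set t : ℝ := R.min' hRne with ht
        obtain ⟨S₁, hS₁B', hS₁⟩ := mem_image.1 (R.min'_mem hRne)
        have hw'pos : ∀ S ∈ B', 0 < w' S := hbal'.2.1
        have hwpos : ∀ S ∈ B, 0 < w S := hbal.2.1
        have htpos : 0 < t := by
          rw [ht, ← hS₁]
          exact div_pos (hwpos S₁ (hB'B hS₁B')) (hw'pos S₁ hS₁B')
        have htle : ∀ S ∈ B', t * w' S ≤ w S := fun S hS =>
          (le_div_iff₀ (hw'pos S hS)).1 (min'_le _ _ (mem_image_of_mem _ hS))
        have ht1 : t < 1 := by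
          by_contra h
          push_neg at h
          have hw'lew : ∀ S ∈ B', w' S ≤ w S := fun S hS => by
            have := htle S hS
            nlinarith [hw'pos S hS]
          set A := B'.filter (fun S => i₀ ∈ S) with hA
          have hS₀A : S₀ ∉ A := fun hc => hS₀B' (mem_filter.1 hc).1
          have hsub2 : insert S₀ A ⊆ B.filter (fun S => i₀ ∈ S) := by
            intro S hS
            rcases mem_insert.1 hS with rfl | hS
            · exact mem_filter.2 ⟨hS₀B, hi₀⟩
            · obtain ⟨h1, h2⟩ := mem_filter.1 hS
              exact mem_filter.2 ⟨hB'B h1, h2⟩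
          have h1 : ∑ S ∈ insert S₀ A, w S ≤ ∑ S ∈ B.filter (fun S => i₀ ∈ S), w S :=
            Finset.sum_le_sum_of_subset_of_nonneg hsub2
              (fun S hS _ => (hwpos S (mem_filter.1 hS).1).le)
          rw [Finset.sum_insert hS₀A] at h1
          have h2 : ∑ S ∈ A, w' S ≤ ∑ S ∈ A, w S :=
            Finset.sum_le_sum (fun S hS => hw'lew S (mem_filter.1 hS).1)
          have h3 := hbal.2.2 i₀
          have h4 := hbal'.2.2 i₀
          rw [← hA] at h4
          have h5 := hwpos S₀ hS₀B
          linarith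
        -- the new weight system
        set ww' : Finset (Fin n) → ℝ := fun S => if S ∈ B' then w' S else 0 with hww'
        set u : Finset (Fin n) → ℝ := fun S => (w S - t * ww' S) / (1 - t) with hu
        have h1t : (0:ℝ) < 1 - t := by linarith
        have hu0 : ∀ S ∈ B, 0 ≤ u S := by
          intro S hS
          apply div_nonneg _ h1t.le
          by_cases h : S ∈ B'
          · simp only [hww', if_pos h]
            linarith [htle S h]
          · simp only [hww', if_neg h]
            linarith [hwpos S hS]
        have hS₁u : u S₁ = 0 := by
          have hw'S₁ := hw'pos S₁ hS₁B'
          simp only [hu, hww', if_pos hS₁B']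
          rw [div_eq_zero_iff]
          left
          have : w S₁ = t * w' S₁ := by
            rw [ht, ← hS₁]
            field_simp
          linarith
        set B'' := B.filter (fun S => 0 < u S) with hB''
        have hB''B : B'' ⊆ B := filter_subset _ _
        have hB''ss : B'' ⊂ B := by
          refine Finset.ssubset_iff_of_subset hB''B |>.2 ⟨S₁, hB'B hS₁B', ?_⟩
          simp [hB'', hS₁u]
        -- u vanishes on B \ B''
        have huz : ∀ S ∈ B, S ∉ B'' → u S = 0 := by
          intro S hS hS''
          have := hu0 S hS
          rcases this.lt_or_eq with h | h
          · exact absurd (mem_filter.2 ⟨hS, h⟩) hS''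
          · exact h.symm
        -- balancedness of (B'', u)
        have hbal'' : IsBalancedCollection B'' u := by
          refine ⟨fun S hS => hbal.1 S (hB''B hS), fun S hS => (mem_filter.1 hS).2, fun i => ?_⟩
          have hsubf : B''.filter (fun S => i ∈ S) ⊆ B.filter (fun S => i ∈ S) :=
            filter_subset_filter _ hB''B
          rw [Finset.sum_subset hsubf (fun S hS hS' => by
            refine huz S (mem_filter.1 hS).1 ?_
            intro hc
            exact hS' (mem_filter.2 ⟨hc, (mem_filter.1 hS).2⟩))]
          have e2 : ∑ S ∈ B.filter (fun S => i ∈ S), ww' S = 1 := by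
            have hsubf' : B'.filter (fun S => i ∈ S) ⊆ B.filter (fun S => i ∈ S) :=
              filter_subset_filter _ hB'B
            rw [← Finset.sum_subset hsubf' (fun S hS hS' => by
              have : S ∉ B' := fun hc => hS' (mem_filter.2 ⟨hc, (mem_filter.1 hS).2⟩)
              simp [hww', this])]
            rw [← hbal'.2.2 i]
            exact Finset.sum_congr rfl (fun S hS => by simp [hww', (mem_filter.1 hS).1])
          simp only [hu]
          rw [← Finset.sum_div, Finset.sum_sub_distrib, ← Finset.mul_sum, hbal.2.2 i, e2]
          field_simp
        -- the decomposition of the sum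
        have hdecomp : ∑ S ∈ B, w S * v S =
            (1 - t) * ∑ S ∈ B'', u S * v S + t * ∑ S ∈ B', w' S * v S := by
          have e1 : ∑ S ∈ B'', u S * v S = ∑ S ∈ B, u S * v S :=
            Finset.sum_subset hB''B (fun S hS hS' => by rw [huz S hS hS', zero_mul])
          have e2 : ∑ S ∈ B', w' S * v S = ∑ S ∈ B, ww' S * v S := by
            have e3 : ∑ S ∈ B', w' S * v S = ∑ S ∈ B', ww' S * v S :=
              Finset.sum_congr rfl (fun S hS => by simp [hww', hS])
            rw [e3]
            exact Finset.sum_subset hB'B (fun S hS hS' => by simp [hww', hS'])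
          rw [e1, e2, Finset.mul_sum, Finset.mul_sum, ← Finset.sum_add_distrib]
          refine Finset.sum_congr rfl (fun S hS => ?_)
          have huS : (1 - t) * u S = w S - t * ww' S := by
            simp only [hu]
            field_simp
          rw [← mul_assoc, huS]
          ring
        have hc1 : B''.card ≤ m := by
          have := Finset.card_lt_card hB''ss
          omega
        have hc2 : B'.card ≤ m := by
          have := Finset.card_lt_card hB'ss
          omega
        have ih1 := ih B'' u hc1 hbal''
        have ih2 := ih B' w' hc2 hbal'
        rw [hdecomp]
        nlinarith

theorem farkas_pi {ι M : Type*} [Fintype ι] [DecidableEq ι] [Fintype M] [DecidableEq M]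
    (g : ι → M → ℝ) (b : M → ℝ) :
    (∃ c : ι → ℝ, (∀ i, 0 ≤ c i) ∧ ∀ m, ∑ i, c i * g i m = b m) ∨
    ∃ y : M → ℝ, (∀ i, 0 ≤ ∑ m, g i m * y m) ∧ ∑ m, y m * b m < 0 := by
  have := farkas_lemma (E := EuclideanSpace ℝ M) (fun i => WithLp.toLp 2 (g i)) (WithLp.toLp 2 b)
  rcases this with ⟨c, hc, hsum⟩ | ⟨y, hy1, hy2⟩
  · left
    refine ⟨c, hc, fun m => ?_⟩
    have := congrArg (fun z : EuclideanSpace ℝ M => z m) hsum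
    simpa using this
  · right
    refine ⟨y, fun i => ?_, ?_⟩
    · have := hy1 i
      rw [PiLp.inner_apply] at this
      simpa [RCLike.inner_apply, mul_comm] using this
    · rw [PiLp.inner_apply] at hy2
      simpa [RCLike.inner_apply, mul_comm] using hy2

/-- Bondareva–Shapley: the core of `v` is nonempty iff `v` is balanced, i.e. iff
`∑_{S ∈ B} λ_S v(S) ≤ v(N)` for all minimal balanced collections `B ≠ {N}`. -/
theorem bondareva_shapley {n : ℕ} (v : Finset (Fin n) → ℝ) (h0 : v ∅ = 0) :
    (core v).Nonempty ↔
      ∀ (B : Finset (Finset (Fin n))) (w : Finset (Fin n) → ℝ),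
        IsMinimalBalanced B w → B ≠ {Finset.univ} →
          ∑ S ∈ B, w S * v S ≤ v Finset.univ := by
  constructor
  · rintro ⟨x, hx1, hx2⟩ B w ⟨hbal, -⟩ -
    calc ∑ S ∈ B, w S * v S
        ≤ ∑ S ∈ B, w S * ∑ i ∈ S, x i :=
          Finset.sum_le_sum (fun S hS =>
            mul_le_mul_of_nonneg_left (hx1 S) (hbal.2.1 S hS).le)
      _ = ∑ S ∈ B, ∑ i : Fin n, (if i ∈ S then w S * x i else 0) := by
          refine Finset.sum_congr rfl (fun S hS => ?_)
          rw [Finset.mul_sum, Finset.sum_ite_mem, Finset.univ_inter]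
      _ = ∑ i : Fin n, ∑ S ∈ B, (if i ∈ S then w S * x i else 0) := Finset.sum_comm
      _ = ∑ i : Fin n, (∑ S ∈ B.filter (fun S => i ∈ S), w S) * x i := by
          refine Finset.sum_congr rfl (fun i _ => ?_)
          rw [Finset.sum_mul, Finset.sum_filter]
      _ = ∑ i, x i := by
          refine Finset.sum_congr rfl (fun i _ => ?_)
          rw [hbal.2.2 i, one_mul]
      _ = v Finset.univ := hx2
  · intro H
    rcases Nat.eq_zero_or_pos n with hn | hn
    · subst hn
      refine ⟨0, fun S => ?_, ?_⟩
      · have hS : S = ∅ := Finset.eq_empty_of_isEmpty S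
        simp [hS, h0]
      · have huniv : (Finset.univ : Finset (Fin 0)) = ∅ := rfl
        simp [huniv, h0]
    · classical
      set Acol : Fin n → Option (Finset (Fin n)) → ℝ := fun j m =>
        match m with
        | none => 1
        | some S => if j ∈ S then (-1 : ℝ) else 0 with hAcol
      set g : ((Fin n ⊕ Fin n) ⊕ Option (Finset (Fin n))) → Option (Finset (Fin n)) → ℝ :=
        fun i =>
        match i with
        | .inl (.inl j) => Acol j
        | .inl (.inr j) => fun m => -Acol j m
        | .inr m' => fun m => if m = m' then 1 else 0 with hg
      set b : Option (Finset (Fin n)) → ℝ := fun m =>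
        match m with
        | none => v Finset.univ
        | some S => -v S with hb
      rcases farkas_pi g b with ⟨c, hc, hce⟩ | ⟨y, hy1, hy2⟩
      · -- construct a core element
        set x : Fin n → ℝ := fun j => c (.inl (.inl j)) - c (.inl (.inr j)) with hx
        have key : ∀ m, (∑ j, x j * Acol j m) + c (.inr m) = b m := by
          intro m
          have h1 := hce m
          rw [Fintype.sum_sum_type, Fintype.sum_sum_type] at h1
          have h2 : ∑ m', c (.inr m') * g (.inr m') m = c (.inr m) := by
            simp [hg, mul_ite, eq_comm]
          rw [h2] at h1
          have h3 : (∑ j, c (.inl (.inl j)) * g (.inl (.inl j)) m)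
              + (∑ j, c (.inl (.inr j)) * g (.inl (.inr j)) m)
              = ∑ j, x j * Acol j m := by
            rw [← Finset.sum_add_distrib]
            refine Finset.sum_congr rfl (fun j _ => ?_)
            simp only [hg, hx]
            ring
          linarith [h1, h3]
        have hcoordS : ∀ S : Finset (Fin n),
            ∑ j, x j * Acol j (some S) = -∑ j ∈ S, x j := by
          intro S
          simp only [hAcol]
          rw [show (∑ j : Fin n, x j * if j ∈ S then (-1:ℝ) else 0)
              = ∑ j : Fin n, (if j ∈ S then -x j else 0) from
            Finset.sum_congr rfl (fun j _ => by by_cases h : j ∈ S <;> simp [h])]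
          rw [Finset.sum_ite_mem, Finset.univ_inter, Finset.sum_neg_distrib]
        have hge : ∀ S : Finset (Fin n), v S ≤ ∑ j ∈ S, x j := by
          intro S
          have := key (some S)
          rw [hcoordS S] at this
          have hnn := hc (.inr (some S))
          simp only [hb] at this
          linarith
        have hletot : ∑ j, x j ≤ v Finset.univ := by
          have := key none
          have h4 : ∑ j, x j * Acol j none = ∑ j, x j := by
            simp [hAcol]
          rw [h4] at this
          have hnn := hc (.inr none)
          simp only [hb] at this
          linarith
        have hgetot := hge Finset.univ
        exact ⟨x, hge, le_antisymm hletot (by simpa using hgetot)⟩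
      · -- derive a contradiction from the balancedness hypothesis
        exfalso
        have hynn : ∀ m, 0 ≤ y m := by
          intro m
          have := hy1 (.inr m)
          simpa [hg, ite_mul, eq_comm] using this
        have hydot : ∀ j : Fin n, ∑ m, Acol j m * y m = 0 := by
          intro j
          have h1 := hy1 (.inl (.inl j))
          have h2 := hy1 (.inl (.inr j))
          simp only [hg] at h1 h2
          simp only [neg_mul, Finset.sum_neg_distrib] at h2
          linarith
        have hEq : ∀ j : Fin n,
            ∑ S ∈ Finset.univ.filter (fun S => j ∈ S), y (some S) = y none := by
          intro j
          have := hydot j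
          rw [Fintype.sum_option] at this
          simp only [hAcol, one_mul] at this
          have h5 : ∑ S : Finset (Fin n), (if j ∈ S then (-1:ℝ) else 0) * y (some S)
              = -∑ S ∈ Finset.univ.filter (fun S => j ∈ S), y (some S) := by
            rw [Finset.sum_filter, ← Finset.sum_neg_distrib]
            refine Finset.sum_congr rfl (fun S _ => ?_)
            by_cases h : j ∈ S <;> simp [h]
          rw [h5] at this
          linarith
        have hlt : y none * v Finset.univ < ∑ S : Finset (Fin n), y (some S) * v S := by
          rw [Fintype.sum_option] at hy2
          simp only [hb] at hy2
          have h6 : ∑ S : Finset (Fin n), y (some S) * -v S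
              = -∑ S : Finset (Fin n), y (some S) * v S := by
            rw [← Finset.sum_neg_distrib]
            exact Finset.sum_congr rfl (fun S _ => by ring)
          rw [h6] at hy2
          linarith
        rcases eq_or_lt_of_le (hynn none) with hmu | hmu
        · -- y none = 0 : all weights on nonempty sets vanish
          have hzero : ∀ S : Finset (Fin n), S.Nonempty → y (some S) = 0 := by
            rintro S ⟨j, hj⟩
            have h7 := hEq j
            rw [← hmu] at h7
            have := (Finset.sum_eq_zero_iff_of_nonneg
              (fun S _ => hynn (some S))).1 h7 S (Finset.mem_filter.2 ⟨Finset.mem_univ S, hj⟩)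
            exact this
          have h8 : ∑ S : Finset (Fin n), y (some S) * v S = 0 := by
            refine Finset.sum_eq_zero (fun S _ => ?_)
            rcases Finset.eq_empty_or_nonempty S with rfl | hSne
            · rw [h0, mul_zero]
            · rw [hzero S hSne, zero_mul]
          rw [h8, ← hmu] at hlt
          simp at hlt
        · -- y none > 0 : build a balanced collection violating the bound
          set μ : ℝ := y none with hμ
          set B : Finset (Finset (Fin n)) :=
            Finset.univ.filter (fun S => S.Nonempty ∧ 0 < y (some S)) with hB
          set w : Finset (Fin n) → ℝ := fun S => y (some S) / μ with hw
          have hbal : IsBalancedCollection B w := by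
            refine ⟨fun S hS => (Finset.mem_filter.1 hS).2.1,
              fun S hS => div_pos (Finset.mem_filter.1 hS).2.2 hmu, fun i => ?_⟩
            have hsub : B.filter (fun S => i ∈ S) ⊆
                Finset.univ.filter (fun S => i ∈ S) := by
              intro S hS
              exact Finset.mem_filter.2 ⟨Finset.mem_univ S, (Finset.mem_filter.1 hS).2⟩
            have hz : ∀ S ∈ Finset.univ.filter (fun S => i ∈ S),
                S ∉ B.filter (fun S => i ∈ S) → y (some S) = 0 := by
              intro S hS hS'
              have hiS : i ∈ S := (Finset.mem_filter.1 hS).2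
              by_contra h
              have hpos : 0 < y (some S) := (hynn (some S)).lt_of_ne (Ne.symm h)
              exact hS' (Finset.mem_filter.2 ⟨Finset.mem_filter.2
                ⟨Finset.mem_univ S, ⟨i, hiS⟩, hpos⟩, hiS⟩)
            have hsum1 : ∑ S ∈ B.filter (fun S => i ∈ S), y (some S) = μ := by
              rw [Finset.sum_subset hsub hz]
              exact hEq i
            simp only [hw]
            rw [← Finset.sum_div, hsum1, div_self hmu.ne']
          have hmain := balanced_sum_le v h0 H B.card B w le_rfl hbal
          have h9 : ∑ S ∈ B, y (some S) * v S = ∑ S : Finset (Fin n), y (some S) * v S := by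
            refine Finset.sum_subset (Finset.subset_univ B) (fun S _ hS' => ?_)
            simp only [hB, Finset.mem_filter, Finset.mem_univ, true_and, not_and] at hS'
            rcases Finset.eq_empty_or_nonempty S with rfl | hSne
            · rw [h0, mul_zero]
            · have := hS' hSne
              push_neg at this
              rw [le_antisymm this (hynn (some S)), zero_mul]
          have h10 : ∑ S ∈ B, w S * v S = (∑ S ∈ B, y (some S) * v S) / μ := by
            rw [Finset.sum_div]
            exact Finset.sum_congr rfl (fun S _ => by rw [hw]; ring)
          rw [h10, h9] at hmain
          rw [div_le_iff₀ hmu] at hmain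
          nlinarith
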